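/- For every quadruple ε = (ε₁, ε₂, ε₃, ε₄) with each εᵢ ∈ {+1, −1} and every integer n, the automorphism Φ_{ε,n} of F satisfies Φ_{ε,n}(a₄) = w · a₄ · (a₃ · (w·a₄)^{ε₄})^{−n}, where w = (a₃⁻¹·a₁·a₂^{−ε₂})^{ε₃}. -/

import Mathlib

/-! `F` is the free group on four generators `a₁, a₂, a₃, a₄`;
here `a 0 = a₁`, `a 1 = a₂`, `a 2 = a₃`, `a 3 = a₄`. -/

abbrev F : Type := FreeGroup (Fin 4)

def a (i : Fin 4) : F := FreeGroup.of i

/-- `Δ i ε` is the endomorphism `Δ_{i+1}^ε` of `F` induced by the `ε`-th power of the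
Dehn twist `D_{i+1}` (the index is shifted by one): `Δ 0 ε = Δ₁^ε`, …, `Δ 4 ε = Δ₅^ε`. -/
def Δ : Fin 5 → ℤ → (F →* F) := fun i ε =>
  FreeGroup.lift (![
    ![a 0, a 1 * a 0 ^ ε, a 2, a 3],
    ![a 0 * a 1 ^ (-ε), a 1, a 2, a 3],
    ![a 0, ((a 2)⁻¹ * a 0) ^ ε * a 1, a 2, ((a 2)⁻¹ * a 0) ^ ε * a 3],
    ![a 0, a 1, a 2 * a 3 ^ ε, a 3],
    ![a 0, a 1, a 2, a 3 * a 2 ^ (-ε)]] i)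

lemma Δ_inv_comp (i : Fin 5) (ε : ℤ) :
    (Δ i (-ε)).comp (Δ i ε) = MonoidHom.id F := by
  apply FreeGroup.ext_hom
  intro j
  fin_cases i <;> fin_cases j <;>
    simp [Δ, a, MonoidHom.comp_apply]

/-- `Δ i ε` as an automorphism of `F` (its inverse is `Δ i (-ε)`). -/
def Δaut (i : Fin 5) (ε : ℤ) : F ≃* F where
  toFun := Δ i ε
  invFun := Δ i (-ε)
  left_inv := fun x => by
    simpa using congrArg (fun f : F →* F => f x) (Δ_inv_comp i ε)
  right_inv := fun x => by
    have h := congrArg (fun f : F →* F => f x) (Δ_inv_comp i (-ε))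
    rw [neg_neg] at h
    simpa using h
  map_mul' := map_mul _

/-- The automorphism `Φ_{ε,n} = Δ₂^{ε₂} ∘ Δ₁^{ε₁} ∘ Δ₃^{ε₃} ∘ Δ₄^{ε₄} ∘ (Δ₅^{+1})^n` of `F`
(multiplication of automorphisms is composition). -/
def Φ (ε₁ ε₂ ε₃ ε₄ n : ℤ) : F ≃* F :=
  Δaut 1 ε₂ * Δaut 0 ε₁ * Δaut 2 ε₃ * Δaut 3 ε₄ * (Δaut 4 1) ^ n

lemma delta5_pow (n : ℤ) : ((Δaut 4 1)^n) (a 3) = a 3 * (a 2)^(-n) ∧ ((Δaut 4 1)^n) (a 2) = a 2 := by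
  induction n using Int.induction_on with
  | zero => simp
  | succ k ih =>
    have h1 : ((Δaut 4 1)^((k:ℤ)+1)) = (Δaut 4 1)^(k:ℤ) * Δaut 4 1 := by
      rw [zpow_add_one]
    constructor <;> rw [h1, MulAut.mul_apply]
    · have : (Δaut 4 1) (a 3) = a 3 * (a 2)⁻¹ := by simp [Δaut, Δ, a]
      rw [this, map_mul, map_inv, ih.1, ih.2]
      group
    · have : (Δaut 4 1) (a 2) = a 2 := by simp [Δaut, Δ, a]
      rw [this, ih.2]
  | pred k ih =>
    have h1 : ((Δaut 4 1)^(-(k:ℤ)-1)) = (Δaut 4 1)^(-(k:ℤ)) * (Δaut 4 1)⁻¹ := by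
      rw [zpow_sub_one]
    have hinv3 : (Δaut 4 1)⁻¹ (a 3) = a 3 * a 2 := by
      apply (Δaut 4 1).injective
      rw [MulAut.apply_inv_self]
      simp [Δaut, Δ, a]
    have hinv2 : (Δaut 4 1)⁻¹ (a 2) = a 2 := by
      apply (Δaut 4 1).injective
      rw [MulAut.apply_inv_self]
      simp [Δaut, Δ, a]
    constructor <;> rw [h1, MulAut.mul_apply]
    · rw [hinv3, map_mul, ih.1, ih.2]
      group
    · rw [hinv2, ih.2]

/-- `Φ_{ε,n}(a₄) = w · a₄ · (a₃ · (w·a₄)^{ε₄})^{−n}` where `w = (a₃⁻¹·a₁·a₂^{−ε₂})^{ε₃}`. -/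
theorem phi_apply_a4 (ε₁ ε₂ ε₃ ε₄ : ℤ)
    (h₁ : ε₁ = 1 ∨ ε₁ = -1) (h₂ : ε₂ = 1 ∨ ε₂ = -1)
    (h₃ : ε₃ = 1 ∨ ε₃ = -1) (h₄ : ε₄ = 1 ∨ ε₄ = -1) (n : ℤ) :
    Φ ε₁ ε₂ ε₃ ε₄ n (a 3) =
      ((a 2)⁻¹ * a 0 * (a 1) ^ (-ε₂)) ^ ε₃ * a 3 *
        (a 2 * (((a 2)⁻¹ * a 0 * (a 1) ^ (-ε₂)) ^ ε₃ * a 3) ^ ε₄) ^ (-n) := by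
  have h5 := delta5_pow n
  show (Δaut 1 ε₂) ((Δaut 0 ε₁) ((Δaut 2 ε₃) ((Δaut 3 ε₄) (((Δaut 4 1)^n) (a 3))))) = _
  rw [h5.1]
  rcases h₂ with rfl|rfl <;> rcases h₃ with rfl|rfl <;> rcases h₄ with rfl|rfl <;>
    simp [Δaut, Δ, a, map_zpow] <;> group
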